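/- Assume there exist θ > 0 with g(θ) < m and δ > 0 such that ρ₀ ∈ C_b(ℝ^d) satisfies 0 ≤ ρ₀(x) ≤ θ − δ for all x ∈ ℝ^d. Then the solution of the kinetic equation satisfies 0 ≤ ρ_t(x) ≤ θ for all t > 0 and all x ∈ ℝ^d. -/

import Mathlib

open MeasureTheory Filter Set Topology
open scoped ENNReal

noncomputable section

abbrev Rd (d : ℕ) := Fin d → ℝ

/-- the convolution `(a ∗ ρ)(x) = ∫ a(x−y) ρ(y) dy` -/
def conv {d : ℕ} (a ρ : Rd d → ℝ) (x : Rd d) : ℝ := ∫ y : Rd d, a (x - y) * ρ y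

/-- the right-hand side of the kinetic equation:
`−m ρ − (a⁻ ∗ ρ) ρ + (a⁺ ∗ ρ)`. -/
def KRHS {d : ℕ} (m : ℝ) (ap am : Rd d → ℝ) (ρ : Rd d → ℝ) : Rd d → ℝ :=
  fun x => -m * ρ x - conv am ρ x * ρ x + conv ap ρ x

/-- classical solution of the kinetic equation on the time set `I`, continuously
differentiable with respect to the `L∞`-norm. -/
structure KinSol {d : ℕ} (m : ℝ) (ap am : Rd d → ℝ) (I : Set ℝ)
    (ρ0 : Rd d → ℝ) (ρ : ℝ → Rd d → ℝ) : Prop where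
  init : ρ 0 =ᵐ[volume] ρ0
  meas : ∀ t ∈ I, AEStronglyMeasurable (ρ t) volume
  bdd : ∀ t ∈ I, eLpNorm (ρ t) ⊤ volume < ⊤
  hasDeriv : ∀ t ∈ I,
    Tendsto (fun h : ℝ =>
        eLpNorm (ρ (t + h) - ρ t - h • KRHS m ap am (ρ t)) ⊤ volume /
          ENNReal.ofReal |h|)
      (𝓝[{h : ℝ | h ≠ 0 ∧ t + h ∈ I}] 0) (𝓝 0)
  contDeriv : ∀ t ∈ I,
    Tendsto (fun s : ℝ =>
        eLpNorm (KRHS m ap am (ρ s) - KRHS m ap am (ρ t)) ⊤ volume)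
      (𝓝[I] t) (𝓝 0)

/-- `Υ_θ = {x : a⁺(x) > θ a⁻(x)}` -/
def Ups {d : ℕ} (ap am : Rd d → ℝ) (θ : ℝ) : Set (Rd d) := {x | θ * am x < ap x}

/-- `g(θ) = f⁺(θ) − θ f⁻(θ)` where `f^±(θ) = ∫_{Υ_θ} a^±(x) dx` -/
def gfun {d : ℕ} (ap am : Rd d → ℝ) (θ : ℝ) : ℝ :=
  (∫ x in Ups ap am θ, ap x) - θ * ∫ x in Ups ap am θ, am x

namespace Statement13Aux

/-- A continuous function that is a.e. bounded by a constant is everywhere bounded. -/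
lemma cont_le_of_ae_le {d : ℕ} {f : Rd d → ℝ} (hf : Continuous f) {c : ℝ}
    (h : ∀ᵐ x ∂(volume : Measure (Rd d)), f x ≤ c) : ∀ x, f x ≤ c := by
  by_contra hc
  push_neg at hc
  obtain ⟨x, hx⟩ := hc
  have hopen : IsOpen {y : Rd d | c < f y} := isOpen_lt continuous_const hf
  have hpos : 0 < volume {y : Rd d | c < f y} := hopen.measure_pos volume ⟨x, hx⟩
  rw [ae_iff] at h
  simp only [not_le] at h
  exact absurd h hpos.ne'

lemma ae_abs_le {d : ℕ} {f : Rd d → ℝ} {r : ℝ} (hr : 0 ≤ r)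
    (h : eLpNorm f ⊤ volume ≤ ENNReal.ofReal r) :
    ∀ᵐ z ∂(volume : Measure (Rd d)), |f z| ≤ r := by
  filter_upwards [ae_le_eLpNormEssSup (f := f) (μ := volume)] with z hz
  rw [eLpNorm_exponent_top] at h
  have h2 : (‖f z‖₊ : ℝ≥0∞) ≤ ENNReal.ofReal r := hz.trans h
  replace h2 : ENNReal.ofReal ‖f z‖ ≤ ENNReal.ofReal r := by rw [ofReal_norm]; exact h2
  have h3 := (ENNReal.ofReal_le_ofReal_iff hr).mp h2
  rwa [Real.norm_eq_abs] at h3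

lemma integrable_shift {d : ℕ} {a : Rd d → ℝ} (ha : Integrable a volume) (x : Rd d) :
    Integrable (fun y => a (x - y)) volume :=
  ((Measure.measurePreserving_sub_left volume x).integrable_comp_emb
    (MeasurableEquiv.subLeft x).measurableEmbedding).mpr ha

lemma integrable_conv_integrand {d : ℕ} {a ρ : Rd d → ℝ} (ha : Integrable a volume)
    (hρm : AEStronglyMeasurable ρ volume) {M : ℝ} (hρb : ∀ z, |ρ z| ≤ M) (x : Rd d) :
    Integrable (fun y => a (x - y) * ρ y) volume := by
  have h1 : Integrable (fun y => ρ y * a (x - y)) volume :=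
    (integrable_shift ha x).bdd_mul hρm
      (Eventually.of_forall fun z => by simpa [Real.norm_eq_abs] using hρb z)
  exact h1.congr (Eventually.of_forall fun y => mul_comm _ _)

lemma shift_ae_nonneg {d : ℕ} {a : Rd d → ℝ} (hameas : Measurable a)
    (hapos : ∀ᵐ z ∂(volume : Measure (Rd d)), 0 ≤ a z) (x : Rd d) :
    ∀ᵐ y ∂(volume : Measure (Rd d)), 0 ≤ a (x - y) := by
  have hmp : MeasurePreserving (fun y : Rd d => x - y) volume volume :=
    Measure.measurePreserving_sub_left volume x
  rw [ae_iff] at hapos ⊢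
  simp only [not_le] at hapos ⊢
  have hs : MeasurableSet {z : Rd d | a z < 0} := measurableSet_lt hameas measurable_const
  have : {y : Rd d | a (x - y) < 0} = (fun y : Rd d => x - y) ⁻¹' {z | a z < 0} := rfl
  rw [this, hmp.measure_preimage hs.nullMeasurableSet]
  exact hapos

lemma conv_nonneg {d : ℕ} {a ρ : Rd d → ℝ} (hameas : Measurable a)
    (hapos : ∀ᵐ z ∂(volume : Measure (Rd d)), 0 ≤ a z)
    (hρ0 : ∀ z, 0 ≤ ρ z) (x : Rd d) : 0 ≤ conv a ρ x := by
  apply integral_nonneg_of_ae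
  filter_upwards [shift_ae_nonneg hameas hapos x] with y hy
  exact mul_nonneg hy (hρ0 y)

lemma conv_le {d : ℕ} {a ρ : Rd d → ℝ} (ha : Integrable a volume) (hameas : Measurable a)
    (hapos : ∀ᵐ z ∂(volume : Measure (Rd d)), 0 ≤ a z)
    (hρm : AEStronglyMeasurable ρ volume) {M : ℝ} (hM : 0 ≤ M)
    (hρ0 : ∀ z, 0 ≤ ρ z) (hρM : ∀ z, ρ z ≤ M) (x : Rd d) :
    conv a ρ x ≤ M * ∫ z, a z := by
  have hρb : ∀ z, |ρ z| ≤ M := fun z => abs_le.mpr ⟨by linarith [hρ0 z], hρM z⟩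
  have h1 : conv a ρ x ≤ ∫ y, a (x - y) * M := by
    apply integral_mono_of_nonneg
    · filter_upwards [shift_ae_nonneg hameas hapos x] with y hy
      exact mul_nonneg hy (hρ0 y)
    · exact (integrable_shift ha x).mul_const M
    · filter_upwards [shift_ae_nonneg hameas hapos x] with y hy
      exact mul_le_mul_of_nonneg_left (hρM y) hy
  have h2 : ∫ y : Rd d, a (x - y) = ∫ z, a z :=
    (Measure.measurePreserving_sub_left volume x).integral_comp
      (MeasurableEquiv.subLeft x).measurableEmbedding a
  calc conv a ρ x ≤ ∫ y, a (x - y) * M := h1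
    _ = (∫ y : Rd d, a (x - y)) * M := integral_mul_const _ _
    _ = M * ∫ z, a z := by rw [h2, mul_comm]

/-- the key convolution estimate: `(a⁺∗ρ)(x) ≤ θ (a⁻∗ρ)(x) + θ g(θ)` whenever `0 ≤ ρ ≤ θ`. -/
lemma conv_key {d : ℕ} {ap am : Rd d → ℝ}
    (hap_int : Integrable ap volume) (ham_int : Integrable am volume)
    (hap_meas : Measurable ap) (ham_meas : Measurable am)
    {θ : ℝ} (hθ : 0 < θ)
    {ρ : Rd d → ℝ} (hρm : AEStronglyMeasurable ρ volume)
    (hρ0 : ∀ z, 0 ≤ ρ z) (hρθ : ∀ z, ρ z ≤ θ) (x : Rd d) :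
    conv ap ρ x ≤ θ * conv am ρ x + θ * gfun ap am θ := by
  have hmp : MeasurePreserving (fun y : Rd d => x - y) volume volume :=
    Measure.measurePreserving_sub_left volume x
  have hemb : MeasurableEmbedding (fun y : Rd d => x - y) :=
    (MeasurableEquiv.subLeft x).measurableEmbedding
  have hρb : ∀ z, |ρ z| ≤ θ := fun z => abs_le.mpr ⟨by linarith [hρ0 z], hρθ z⟩
  have iap : Integrable (fun y => ap (x - y) * ρ y) volume :=
    integrable_conv_integrand hap_int hρm hρb x
  have iam : Integrable (fun y => am (x - y) * ρ y) volume :=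
    integrable_conv_integrand ham_int hρm hρb x
  set F : Rd d → ℝ := fun y => (ap (x - y) - θ * am (x - y)) * ρ y with hF
  have hFeq : F = fun y => ap (x - y) * ρ y - θ * (am (x - y) * ρ y) := by
    funext y; simp only [hF]; ring
  have hFint : Integrable F volume := by
    rw [hFeq]; exact iap.sub (iam.const_mul θ)
  have hintF : ∫ y, F y = conv ap ρ x - θ * conv am ρ x := by
    rw [hFeq, integral_sub iap (iam.const_mul θ), integral_const_mul]
    rfl
  set P : Set (Rd d) := (fun y : Rd d => x - y) ⁻¹' (Ups ap am θ) with hP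
  have hUmeas : MeasurableSet (Ups ap am θ) :=
    measurableSet_lt (ham_meas.const_mul θ) hap_meas
  have hPmeas : MeasurableSet P := hmp.measurable hUmeas
  have hsplit : ∫ y, F y = (∫ y in P, F y) + ∫ y in Pᶜ, F y :=
    (integral_add_compl hPmeas hFint).symm
  have hcompl : ∫ y in Pᶜ, F y ≤ 0 := by
    apply setIntegral_nonpos hPmeas.compl
    intro y hy
    have h1 : ¬ (θ * am (x - y) < ap (x - y)) := hy
    push_neg at h1
    have h2 : ap (x - y) - θ * am (x - y) ≤ 0 := by linarith
    simp only [hF]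
    nlinarith [hρ0 y]
  have ig : Integrable (fun y => (ap (x - y) - θ * am (x - y)) * θ) volume := by
    apply Integrable.mul_const
    exact (integrable_shift hap_int x).sub ((integrable_shift ham_int x).const_mul θ)
  have hPle : ∫ y in P, F y ≤ ∫ y in P, (ap (x - y) - θ * am (x - y)) * θ := by
    apply setIntegral_mono_on hFint.integrableOn ig.integrableOn hPmeas
    intro y hy
    have h1 : θ * am (x - y) < ap (x - y) := hy
    simp only [hF]
    exact mul_le_mul_of_nonneg_left (hρθ y) (by linarith)
  have hchange : ∫ y in P, (ap (x - y) - θ * am (x - y))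
      = ∫ z in Ups ap am θ, (ap z - θ * am z) :=
    hmp.setIntegral_preimage_emb hemb (fun z => ap z - θ * am z) (Ups ap am θ)
  have hUps : ∫ z in Ups ap am θ, (ap z - θ * am z) = gfun ap am θ := by
    rw [integral_sub hap_int.integrableOn (ham_int.integrableOn.const_mul θ),
      integral_const_mul]
    rfl
  have hPθ : ∫ y in P, (ap (x - y) - θ * am (x - y)) * θ = θ * gfun ap am θ := by
    rw [integral_mul_const, hchange, hUps, mul_comm]
  have : conv ap ρ x - θ * conv am ρ x ≤ θ * gfun ap am θ := by
    rw [← hintF, hsplit]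
    linarith [hPle, hcompl, hPθ.le, hPθ.ge]
  linarith

end Statement13Aux

open Statement13Aux in
set_option maxHeartbeats 1000000 in
theorem statement13
    (d : ℕ) (hd : 1 ≤ d) (m : ℝ) (hm : 0 ≤ m)
    (aplus aminus : Rd d → ℝ)
    (hap_int : Integrable aplus volume) (ham_int : Integrable aminus volume)
    (hap_bdd : eLpNorm aplus ⊤ volume < ⊤) (ham_bdd : eLpNorm aminus ⊤ volume < ⊤)
    (hap_even : ∀ᵐ x ∂volume, aplus (-x) = aplus x)
    (ham_even : ∀ᵐ x ∂volume, aminus (-x) = aminus x)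
    (hap_pos : ∀ᵐ x ∂volume, 0 ≤ aplus x)
    (ham_pos : ∀ᵐ x ∂volume, 0 ≤ aminus x)
    (hap_meas : Measurable aplus) (ham_meas : Measurable aminus)
    (θ : ℝ) (hθ : 0 < θ) (hgθ : gfun aplus aminus θ < m)
    (δ : ℝ) (hδ : 0 < δ)
    (ρ0 : Rd d → ℝ) (hρ0_cont : Continuous ρ0)
    (hρ0_bdd : ∃ M : ℝ, ∀ x, ρ0 x ≤ M)
    (hρ0_pos : ∀ x, 0 ≤ ρ0 x)
    (ρ : ℝ → Rd d → ℝ)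
    (hsol : KinSol m aplus aminus (Set.Ici 0) ρ0 ρ)
    (hρ_init : ρ 0 = ρ0)
    (hρ_cont : ∀ t ∈ Set.Ici (0 : ℝ), Continuous (ρ t))
    (hρ_pos : ∀ t ∈ Set.Ici (0 : ℝ), ∀ x, 0 ≤ ρ t x)
    (hρ0_le : ∀ x, ρ0 x ≤ θ - δ) :
    ∀ t, 0 < t → ∀ x, ρ t x ≤ θ := by
  obtain ⟨hinit, hmeas, hbdd, hderiv, hcont⟩ := hsol
  set Iam : ℝ := ∫ z, aminus z with hIamdef
  set Iap : ℝ := ∫ z, aplus z with hIapdef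
  have hIam0 : 0 ≤ Iam := integral_nonneg_of_ae ham_pos
  have hIap0 : 0 ≤ Iap := integral_nonneg_of_ae hap_pos
  set gg : ℝ := gfun aplus aminus θ with hggdef
  set c : ℝ := θ * (m - gg) / 2 with hcdef
  have hmg : 0 < m - gg := sub_pos.mpr hgθ
  have hc0 : 0 < c := by rw [hcdef]; positivity
  set B : ℝ := m + θ * Iam with hBdef
  have hB0 : 0 ≤ B := by rw [hBdef]; positivity
  set C : ℝ := θ * Iap with hCdef
  have hC0 : 0 ≤ C := by rw [hCdef]; positivity
  set ε₀ : ℝ := min θ (c / (B + 1)) with hε₀def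
  have hε₀0 : 0 < ε₀ := lt_min hθ (by positivity)
  set ε₁ : ℝ := min δ (ε₀ / 2) with hε₁def
  have hε₁0 : 0 < ε₁ := lt_min hδ (by positivity)
  have hε₁δ : ε₁ ≤ δ := min_le_left _ _
  have hε₁ε₀ : ε₁ ≤ ε₀ / 2 := min_le_right _ _
  set h₀ : ℝ := (ε₀ - ε₁) / (C + c) with hh₀def
  have hh₀0 : 0 < h₀ := div_pos (by linarith) (by linarith)
  -- pointwise upper bound on ρ t from the L∞ bound
  have hbound : ∀ t ∈ Set.Ici (0 : ℝ), ∃ M : ℝ, 0 ≤ M ∧ ∀ z, ρ t z ≤ M := by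
    intro t ht
    refine ⟨(eLpNorm (ρ t) ⊤ volume).toReal, ENNReal.toReal_nonneg, ?_⟩
    apply cont_le_of_ae_le (hρ_cont t ht)
    filter_upwards [ae_le_eLpNormEssSup (f := ρ t) (μ := volume)] with z hz
    have h2 : (‖ρ t z‖₊ : ℝ≥0∞) ≤ eLpNorm (ρ t) ⊤ volume := by
      rwa [eLpNorm_exponent_top]
    have h3 : ‖ρ t z‖ ≤ (eLpNorm (ρ t) ⊤ volume).toReal := by
      have h4 := ENNReal.toReal_mono (hbdd t ht).ne h2
      simpa [coe_nnnorm] using h4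
    exact (Real.le_norm_self _).trans h3
  -- continuity of t ↦ ρ t x on [0, ∞)
  have htime : ∀ t ∈ Set.Ici (0 : ℝ), ∀ x : Rd d,
      ContinuousWithinAt (fun u => ρ u x) (Set.Ici 0) t := by
    intro t ht x
    obtain ⟨M, hM0, hM⟩ := hbound t ht
    have htpos := hρ_pos t ht
    have htabs : ∀ z, |ρ t z| ≤ M := fun z => abs_le.mpr ⟨by linarith [htpos z], hM z⟩
    set CK : ℝ := m * M + M * Iam * M + M * Iap with hCKdef
    have hCK0 : 0 ≤ CK := by rw [hCKdef]; positivity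
    have hKb : ∀ z, |KRHS m aplus aminus (ρ t) z| ≤ CK := by
      intro z
      have h1 : 0 ≤ conv aminus (ρ t) z := conv_nonneg ham_meas ham_pos htpos z
      have h2 : conv aminus (ρ t) z ≤ M * Iam :=
        conv_le ham_int ham_meas ham_pos (hmeas t ht) hM0 htpos hM z
      have h3 : 0 ≤ conv aplus (ρ t) z := conv_nonneg hap_meas hap_pos htpos z
      have h4 : conv aplus (ρ t) z ≤ M * Iap :=
        conv_le hap_int hap_meas hap_pos (hmeas t ht) hM0 htpos hM z
      have h5 : 0 ≤ m * ρ t z := mul_nonneg hm (htpos z)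
      have h6 : m * ρ t z ≤ m * M := mul_le_mul_of_nonneg_left (hM z) hm
      have h7 : 0 ≤ conv aminus (ρ t) z * ρ t z := mul_nonneg h1 (htpos z)
      have h8 : conv aminus (ρ t) z * ρ t z ≤ M * Iam * M :=
        mul_le_mul h2 (hM z) (htpos z) (by positivity)
      rw [KRHS, abs_le]
      constructor <;> [nlinarith; nlinarith]
    have hev : ∀ᶠ h in 𝓝[{h : ℝ | h ≠ 0 ∧ t + h ∈ Set.Ici 0}] (0 : ℝ),
        eLpNorm (ρ (t + h) - ρ t - h • KRHS m aplus aminus (ρ t)) ⊤ volume /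
          ENNReal.ofReal |h| < 1 :=
      (hderiv t ht).eventually_lt_const zero_lt_one
    rw [eventually_nhdsWithin_iff, Metric.eventually_nhds_iff] at hev
    obtain ⟨ε', hε'0, hε'⟩ := hev
    have hstep : ∀ h : ℝ, t + h ∈ Set.Ici (0 : ℝ) → |h| < ε' →
        ∀ z, |ρ (t + h) z - ρ t z| ≤ |h| * (1 + CK) := by
      intro h hth hhe z
      rcases eq_or_ne h 0 with rfl | hne
      · simp
      · have hmem : h ∈ {h : ℝ | h ≠ 0 ∧ t + h ∈ Set.Ici 0} := ⟨hne, hth⟩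
        have hdist : dist h 0 < ε' := by rwa [Real.dist_eq, sub_zero]
        have hQ := hε' hdist hmem
        have habs0 : ENNReal.ofReal |h| ≠ 0 := by
          rw [Ne, ENNReal.ofReal_eq_zero, not_le]
          exact abs_pos.mpr hne
        have hlt : eLpNorm (ρ (t + h) - ρ t - h • KRHS m aplus aminus (ρ t)) ⊤ volume
            ≤ ENNReal.ofReal |h| := by
          have := (ENNReal.div_lt_iff (Or.inl habs0) (Or.inl ENNReal.ofReal_ne_top)).mp hQ
          simpa using this.le
        have hae := ae_abs_le (abs_nonneg h) hlt
        have hae2 : ∀ᵐ z ∂(volume : Measure (Rd d)),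
            |ρ (t + h) z - ρ t z| ≤ |h| * (1 + CK) := by
          filter_upwards [hae] with w hw
          simp only [Pi.sub_apply, Pi.smul_apply, smul_eq_mul] at hw
          have h9 : |h * KRHS m aplus aminus (ρ t) w| ≤ |h| * CK := by
            rw [abs_mul]
            exact mul_le_mul_of_nonneg_left (hKb w) (abs_nonneg h)
          have h12 : |ρ (t + h) w - ρ t w|
              ≤ |ρ (t + h) w - ρ t w - h * KRHS m aplus aminus (ρ t) w|
                + |h * KRHS m aplus aminus (ρ t) w| := by
            have h10 := abs_add_le (ρ (t + h) w - ρ t w - h * KRHS m aplus aminus (ρ t) w)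
              (h * KRHS m aplus aminus (ρ t) w)
            have h11 : ρ (t + h) w - ρ t w - h * KRHS m aplus aminus (ρ t) w
                + h * KRHS m aplus aminus (ρ t) w = ρ (t + h) w - ρ t w := by ring
            rwa [h11] at h10
          calc |ρ (t + h) w - ρ t w|
              ≤ |ρ (t + h) w - ρ t w - h * KRHS m aplus aminus (ρ t) w|
                + |h * KRHS m aplus aminus (ρ t) w| := h12
            _ ≤ |h| + |h| * CK := add_le_add hw h9
            _ = |h| * (1 + CK) := by ring
        have hcw : Continuous fun z => |ρ (t + h) z - ρ t z| :=
          ((hρ_cont (t + h) hth).sub (hρ_cont t ht)).abs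
        exact cont_le_of_ae_le hcw hae2 z
    rw [Metric.continuousWithinAt_iff]
    intro ε hε
    refine ⟨min ε' (ε / (2 * (1 + CK))), lt_min hε'0 (by positivity), ?_⟩
    intro u hu hud
    have h1 : |u - t| < ε' := lt_of_lt_of_le (by rwa [Real.dist_eq] at hud) (min_le_left _ _)
    have h2 : |u - t| < ε / (2 * (1 + CK)) :=
      lt_of_lt_of_le (by rwa [Real.dist_eq] at hud) (min_le_right _ _)
    have h3 := hstep (u - t) (by simpa using hu) h1 x
    rw [add_sub_cancel] at h3
    rw [Real.dist_eq]
    have hCK1 : (0:ℝ) < 2 * (1 + CK) := by positivity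
    have h5 := (lt_div_iff₀ hCK1).mp h2
    nlinarith [abs_nonneg (u - t)]
  -- the invariance argument
  have key : ∀ b : ℝ, Set.Icc (0 : ℝ) b ⊆ {t : ℝ | ∀ x, ρ t x ≤ θ - ε₁} := by
    intro b
    set s : Set ℝ := {t : ℝ | ∀ x, ρ t x ≤ θ - ε₁} with hsdef
    have h0s : (0 : ℝ) ∈ s := by
      intro x
      rw [hρ_init]
      linarith [hρ0_le x]
    have hclosed : IsClosed (s ∩ Set.Icc 0 b) := by
      apply IsSeqClosed.isClosed
      intro u L hu hL
      have hIcc : L ∈ Set.Icc (0 : ℝ) b :=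
        isClosed_Icc.isSeqClosed (fun n => (hu n).2) hL
      refine ⟨fun x => ?_, hIcc⟩
      have h1 : Tendsto (fun n => ρ (u n) x) atTop (𝓝 (ρ L x)) := by
        apply (htime L hIcc.1 x).tendsto.comp
        apply tendsto_nhdsWithin_of_tendsto_nhds_of_eventually_within u hL
        exact Eventually.of_forall fun n => (hu n).2.1
      exact le_of_tendsto h1 (Eventually.of_forall fun n => (hu n).1 x)
    have hgt : ∀ t ∈ s ∩ Set.Ico 0 b, ∀ y ∈ Set.Ioi t, (s ∩ Set.Ioc t y).Nonempty := by
      intro t ht y hy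
      have ht0 : t ∈ Set.Ici (0 : ℝ) := ht.2.1
      have hts : ∀ z, ρ t z ≤ θ - ε₁ := ht.1
      have htpos : ∀ z, 0 ≤ ρ t z := hρ_pos t ht0
      have htθ : ∀ z, ρ t z ≤ θ := fun z => le_trans (hts z) (by linarith)
      have hcam0 : ∀ z, 0 ≤ conv aminus (ρ t) z :=
        fun z => conv_nonneg ham_meas ham_pos htpos z
      have hcamle : ∀ z, conv aminus (ρ t) z ≤ θ * Iam :=
        fun z => conv_le ham_int ham_meas ham_pos (hmeas t ht0) hθ.le htpos htθ z
      have hcap0 : ∀ z, 0 ≤ conv aplus (ρ t) z :=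
        fun z => conv_nonneg hap_meas hap_pos htpos z
      have hcaple : ∀ z, conv aplus (ρ t) z ≤ θ * Iap :=
        fun z => conv_le hap_int hap_meas hap_pos (hmeas t ht0) hθ.le htpos htθ z
      have hkey : ∀ z, conv aplus (ρ t) z ≤ θ * conv aminus (ρ t) z + θ * gg :=
        fun z => conv_key hap_int ham_int hap_meas ham_meas hθ (hmeas t ht0) htpos htθ z
      -- upper bound on KRHS everywhere
      have hKC : ∀ z, KRHS m aplus aminus (ρ t) z ≤ C := by
        intro z
        have h5 : 0 ≤ m * ρ t z := mul_nonneg hm (htpos z)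
        have h7 : 0 ≤ conv aminus (ρ t) z * ρ t z := mul_nonneg (hcam0 z) (htpos z)
        rw [KRHS]
        have := hcaple z
        rw [hCdef]
        nlinarith
      -- KRHS is ≤ -c near the top
      have hKtop : ∀ z, θ - ε₀ ≤ ρ t z → KRHS m aplus aminus (ρ t) z ≤ -c := by
        intro z hz
        have h1 : conv aminus (ρ t) z * (θ - ρ t z) ≤ (θ * Iam) * ε₀ := by
          apply mul_le_mul (hcamle z) (by linarith) (by linarith [htθ z]) (by positivity)
        have h2 : m * (θ - ε₀) ≤ m * ρ t z := mul_le_mul_of_nonneg_left hz hm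
        have h3 : θ * (gg - m) = -(2 * c) := by rw [hcdef]; ring
        have h4 : ε₀ * B ≤ c := by
          have h5 : ε₀ * B ≤ (c / (B + 1)) * B :=
            mul_le_mul_of_nonneg_right (min_le_right _ _) hB0
          have h6 : (c / (B + 1)) * B ≤ c := by
            rw [div_mul_eq_mul_div, div_le_iff₀ (by linarith : (0:ℝ) < B + 1)]
            nlinarith
          exact le_trans h5 h6
        have h7 := hkey z
        rw [KRHS]
        rw [hBdef] at h4
        nlinarith
      -- step estimate
      have hstep : ∀ h : ℝ, 0 < h → h ≤ h₀ →
          ∀ z, ρ t z + h * KRHS m aplus aminus (ρ t) z ≤ θ - ε₁ - h * c := by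
        intro h hh0 hhh₀ z
        rcases le_or_gt (θ - ε₀) (ρ t z) with hcase | hcase
        · have h1 := hKtop z hcase
          have h2 : h * KRHS m aplus aminus (ρ t) z ≤ h * (-c) :=
            mul_le_mul_of_nonneg_left h1 hh0.le
          have := hts z
          nlinarith
        · have h1 : h * KRHS m aplus aminus (ρ t) z ≤ h * C :=
            mul_le_mul_of_nonneg_left (hKC z) hh0.le
          have h2 : h * (C + c) ≤ ε₀ - ε₁ := by
            rw [hh₀def] at hhh₀
            rw [← le_div_iff₀ (by linarith : (0:ℝ) < C + c)]
            exact hhh₀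
          nlinarith
      -- use the derivative to advance
      have hev : ∀ᶠ h in 𝓝[{h : ℝ | h ≠ 0 ∧ t + h ∈ Set.Ici 0}] (0 : ℝ),
          eLpNorm (ρ (t + h) - ρ t - h • KRHS m aplus aminus (ρ t)) ⊤ volume /
            ENNReal.ofReal |h| < ENNReal.ofReal (c / 2) :=
        (hderiv t ht0).eventually_lt_const (ENNReal.ofReal_pos.mpr (by linarith))
      rw [eventually_nhdsWithin_iff, Metric.eventually_nhds_iff] at hev
      obtain ⟨ε', hε'0, hε'⟩ := hev
      set h : ℝ := min (min (ε' / 2) h₀) (y - t) with hhdef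
      have hh0 : 0 < h := by
        apply lt_min (lt_min (by linarith) hh₀0)
        simpa using sub_pos.mpr (Set.mem_Ioi.mp hy)
      have hhh₀ : h ≤ h₀ := le_trans (min_le_left _ _) (min_le_right _ _)
      have hhy : h ≤ y - t := min_le_right _ _
      have hth : t + h ∈ Set.Ici (0 : ℝ) := by
        simp only [Set.mem_Ici]
        have : (0:ℝ) ≤ t := ht0
        linarith
      have hmem : h ∈ {h : ℝ | h ≠ 0 ∧ t + h ∈ Set.Ici 0} := ⟨ne_of_gt hh0, hth⟩
      have hdist : dist h 0 < ε' := by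
        rw [Real.dist_eq, sub_zero, abs_of_pos hh0]
        have : h ≤ ε' / 2 := le_trans (min_le_left _ _) (min_le_left _ _)
        linarith
      have hQ := hε' hdist hmem
      have habs0 : ENNReal.ofReal |h| ≠ 0 := by
        rw [Ne, ENNReal.ofReal_eq_zero, not_le]
        exact abs_pos.mpr (ne_of_gt hh0)
      have hlt : eLpNorm (ρ (t + h) - ρ t - h • KRHS m aplus aminus (ρ t)) ⊤ volume
          ≤ ENNReal.ofReal (c / 2 * h) := by
        have h1 := (ENNReal.div_lt_iff (Or.inl habs0) (Or.inl ENNReal.ofReal_ne_top)).mp hQ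
        have h2 : ENNReal.ofReal (c / 2) * ENNReal.ofReal |h| = ENNReal.ofReal (c / 2 * h) := by
          rw [← ENNReal.ofReal_mul (by linarith), abs_of_pos hh0]
        rw [h2] at h1
        exact h1.le
      have hae := ae_abs_le (by positivity) hlt
      have hae2 : ∀ᵐ z ∂(volume : Measure (Rd d)), ρ (t + h) z ≤ θ - ε₁ := by
        filter_upwards [hae] with w hw
        simp only [Pi.sub_apply, Pi.smul_apply, smul_eq_mul] at hw
        have h1 := hstep h hh0 hhh₀ w
        have h2 := abs_le.mp hw
        nlinarith
      have hmem2 : t + h ∈ s := cont_le_of_ae_le (hρ_cont (t + h) hth) hae2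
      exact ⟨t + h, hmem2, lt_add_of_pos_right t hh0, by linarith⟩
    exact hclosed.Icc_subset_of_forall_exists_gt h0s hgt
  intro t ht x
  have h1 := key t ⟨le_of_lt ht, le_refl t⟩ x
  linarith
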